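/- Let k be a cubic field and let a be a nonzero fractional ideal of k whose absolute norm N(a) is a square in QQ. Then there exists delta in k^* with N_{k/QQ}(delta) a square in QQ such that the fractional ideal delta*a is coprime to 2, i.e., v_p(delta*a) = 0 for every prime ideal p of Z_k dividing 2*Z_k. -/

import Mathlib

open NumberField FractionalIdeal
open scoped nonZeroDivisors
open UniqueFactorizationMonoid

lemma aux_exists_elt {R : Type*} [CommRing R] [IsDedekindDomain R] [DecidableEq (Ideal R)]
    {S : Finset (Ideal R)} (hS : ∀ q ∈ S, Prime q) (hne : S.Nonempty) (n : Ideal R → ℕ) :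
    ∃ γ : R, γ ≠ 0 ∧ ∀ q ∈ S, (normalizedFactors (Ideal.span {γ})).count q = n q := by
  have hx : ∀ q ∈ S, ∃ x, x ∈ q ^ (n q) ∧ x ∉ q ^ (n q + 1) := by
    intro q hq
    haveI : q.IsPrime := Ideal.isPrime_of_prime (hS q hq)
    obtain ⟨x, h1, h2⟩ := SetLike.exists_of_lt (Ideal.pow_succ_lt_pow (hS q hq).ne_zero (n q))
    exact ⟨x, h1, h2⟩
  choose x hx1 hx2 using hx
  obtain ⟨y, hy⟩ := IsDedekindDomain.exists_forall_sub_mem_ideal (s := S) id (fun q => n q + 1)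
      (fun i hi => hS i hi) (fun i _ j _ hij => hij) (fun q => x q.1 q.2)
  have hymem : ∀ q (hq : q ∈ S), y ∈ q ^ (n q) := by
    intro q hq
    have h1 := hy q hq
    have h2 : y - x q hq ∈ q ^ (n q) :=
      Ideal.pow_le_pow_right (Nat.le_succ _) h1
    have := add_mem h2 (hx1 q hq)
    simpa using this
  have hynmem : ∀ q (hq : q ∈ S), y ∉ q ^ (n q + 1) := by
    intro q hq hmem
    exact hx2 q hq (by simpa using sub_mem hmem (hy q hq))
  obtain ⟨q0, hq0⟩ := hne
  refine ⟨y, fun h => hynmem q0 hq0 (h ▸ zero_mem _), fun q hq => ?_⟩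
  haveI : q.IsPrime := Ideal.isPrime_of_prime (hS q hq)
  convert Ideal.count_normalizedFactors_eq
    ((Ideal.span_singleton_le_iff_mem _).mpr (hymem q hq))
    (fun h => hynmem q hq ((Ideal.span_singleton_le_iff_mem _).mp h))

lemma aux_decompose {R : Type*} [CommRing R] [IsDedekindDomain R] [DecidableEq (Ideal R)]
    {M Num Den : Ideal R} (hNum : Num ≠ 0) (hDen : Den ≠ 0)
    (hcount : ∀ q ∈ normalizedFactors M,
      (normalizedFactors Num).count q = (normalizedFactors Den).count q) :
    ∃ (T : Ideal R) (sb sc : Multiset (Ideal R)),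
      Num = T * sb.prod ∧ Den = T * sc.prod ∧
      (∀ q ∈ sb, Prime q ∧ q ∉ normalizedFactors M) ∧
      (∀ q ∈ sc, Prime q ∧ q ∉ normalizedFactors M) := by
  classical
  refine ⟨((normalizedFactors Num).filter (· ∈ normalizedFactors M)).prod,
    (normalizedFactors Num).filter (fun q => q ∉ normalizedFactors M),
    (normalizedFactors Den).filter (fun q => q ∉ normalizedFactors M), ?_, ?_, ?_, ?_⟩
  · rw [← Multiset.prod_add, Multiset.filter_add_not]
    exact (associated_iff_eq.mp (prod_normalizedFactors hNum)).symm
  · have hfe : (normalizedFactors Num).filter (· ∈ normalizedFactors M)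
        = (normalizedFactors Den).filter (· ∈ normalizedFactors M) := by
      ext q
      rw [Multiset.count_filter, Multiset.count_filter]
      split
      · exact hcount q (by assumption)
      · rfl
    rw [hfe, ← Multiset.prod_add, Multiset.filter_add_not]
    exact (associated_iff_eq.mp (prod_normalizedFactors hDen)).symm
  · intro q hq
    rw [Multiset.mem_filter] at hq
    exact ⟨prime_of_normalized_factor q hq.1, hq.2⟩
  · intro q hq
    rw [Multiset.mem_filter] at hq
    exact ⟨prime_of_normalized_factor q hq.1, hq.2⟩

lemma aux_coprime {R : Type*} [CommRing R] [IsDedekindDomain R]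
    {M q : Ideal R} (hM : M ≠ 0) (hq : Prime q) (hqM : q ∉ normalizedFactors M) :
    IsCoprime q M := by
  rw [Ideal.isCoprime_iff_sup_eq]
  haveI : q.IsPrime := Ideal.isPrime_of_prime hq
  have hmax : q.IsMaximal := Ideal.IsPrime.isMaximal ‹_› hq.ne_zero
  by_cases h : M ≤ q
  · exact absurd ((mem_normalizedFactors_iff hM).mpr ⟨hq, Ideal.dvd_iff_le.mpr h⟩) hqM
  · exact hmax.1.2 _ (left_lt_sup.mpr h)

lemma aux_odd_absNorm {k : Type*} [Field k] [NumberField k]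
    {q : Ideal (𝓞 k)} (hq : Prime q) (h2 : (2 : 𝓞 k) ∉ q) :
    ¬ 2 ∣ Ideal.absNorm q := by
  haveI : q.IsPrime := Ideal.isPrime_of_prime hq
  haveI hmax : q.IsMaximal := Ideal.IsPrime.isMaximal ‹_› hq.ne_zero
  letI : Fintype (𝓞 k ⧸ q) := @Fintype.ofFinite _ (Ideal.finiteQuotientOfFreeOfNeBot q hq.ne_zero)
  letI : Field (𝓞 k ⧸ q) := Ideal.Quotient.field q
  intro hdvd
  have hcard : Ideal.absNorm q = Fintype.card (𝓞 k ⧸ q) := by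
    rw [Ideal.absNorm_apply, Submodule.cardQuot_apply, Nat.card_eq_fintype_card]
  obtain ⟨n, hpp, hc⟩ := FiniteField.card (𝓞 k ⧸ q) (ringChar (𝓞 k ⧸ q))
  rw [hcard, hc] at hdvd
  have h2p : 2 = ringChar (𝓞 k ⧸ q) := (Nat.prime_dvd_prime_iff_eq Nat.prime_two hpp).mp
    (Nat.prime_two.dvd_of_dvd_pow hdvd)
  have h20 : ((2 : ℕ) : 𝓞 k ⧸ q) = 0 := by
    rw [h2p]; exact ringChar.Nat.cast_ringChar
  apply h2
  rw [← Ideal.Quotient.eq_zero_iff_mem]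
  have heq : (Ideal.Quotient.mk q) (2 : 𝓞 k) = ((2 : ℕ) : 𝓞 k ⧸ q) := by
    push_cast; rfl
  rw [heq, h20]

set_option maxHeartbeats 1000000 in
/-- Let `k` be a cubic field and `a` a nonzero fractional ideal of `k`
whose absolute norm is a square in `ℚ`.  Then there is `δ ∈ k*` of square norm such
that `δ·a` is coprime to `2`, i.e. `δ·a = b/c` with `b, c` integral ideals coprime to
`2𝓞 k` (equivalently, `v_p(δ·a) = 0` for all primes `p ∣ 2𝓞 k`). -/
theorem statement18 (k : Type*) [Field k] [NumberField k]
    (h3 : Module.finrank ℚ k = 3)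
    (a : FractionalIdeal (𝓞 k)⁰ k) (ha : a ≠ 0)
    (hsq : IsSquare (FractionalIdeal.absNorm a)) :
    ∃ δ : k, δ ≠ 0 ∧ IsSquare (Algebra.norm ℚ δ) ∧
      ∃ b c : Ideal (𝓞 k),
        IsCoprime b (Ideal.span {(2 : 𝓞 k)}) ∧
        IsCoprime c (Ideal.span {(2 : 𝓞 k)}) ∧
        spanSingleton (𝓞 k)⁰ δ * a =
          (b : FractionalIdeal (𝓞 k)⁰ k) / (c : FractionalIdeal (𝓞 k)⁰ k) := by
  classical
  haveI : Fact (Nat.Prime 2) := ⟨Nat.prime_two⟩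
  -- basic facts about 2
  have hnr : ∀ r : ℚ, Algebra.norm ℚ (algebraMap ℚ k r) = r ^ 3 := fun r => by
    rw [Algebra.norm_algebraMap, h3]
  have h2R0 : (2 : (𝓞 k)) ≠ 0 := by
    intro h
    have : ((2 : (𝓞 k)) : k) = 0 := by rw [h]; simp
    rw [RingOfIntegers.coe_eq_algebraMap, map_ofNat] at this
    exact two_ne_zero this
  set M : Ideal (𝓞 k) := Ideal.span {(2 : (𝓞 k))} with hM
  have hM0 : M ≠ 0 := by
    rw [hM, Ne, Ideal.zero_eq_bot, Ideal.span_singleton_eq_bot]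
    exact h2R0
  have hMunit : ¬ IsUnit M := by
    intro h
    rw [Ideal.isUnit_iff, hM, Ideal.span_singleton_eq_top] at h
    obtain ⟨u, hu⟩ := h.exists_right_inv
    have h1 : Algebra.norm ℚ (((2 : (𝓞 k)) : k)) * Algebra.norm ℚ ((u : k)) = 1 := by
      rw [← _root_.map_mul, ← _root_.map_mul]
      rw [show (2 : (𝓞 k)) * u = 1 from hu]
      simp
    rw [RingOfIntegers.coe_eq_algebraMap, map_ofNat,
      show ((2 : k)) = algebraMap ℚ k 2 from (map_ofNat _ 2).symm, hnr] at h1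
    rw [← Algebra.coe_norm_int u] at h1
    have : (8 : ℚ) * ((Algebra.norm ℤ u : ℤ) : ℚ) = 1 := by
      rw [← h1]; norm_num
    have h8 : ((8 * Algebra.norm ℤ u : ℤ) : ℚ) = ((1 : ℤ) : ℚ) := by push_cast; linarith
    have := Int.cast_injective (α := ℚ) h8
    omega
  -- primes dividing 2
  have hSprime : ∀ q ∈ (normalizedFactors M).toFinset, Prime q := fun q hq =>
    prime_of_normalized_factor q (Multiset.mem_toFinset.mp hq)
  have hSne : ((normalizedFactors M).toFinset).Nonempty := by
    rw [Finset.nonempty_iff_ne_empty]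
    intro h
    have h0 : normalizedFactors M = 0 := by
      exact Multiset.toFinset_eq_empty.mp h
    have hassoc := prod_normalizedFactors hM0
    rw [h0, Multiset.prod_zero] at hassoc
    exact hMunit (associated_one_iff_isUnit.mp hassoc.symm)
  have h2mem : ∀ q ∈ normalizedFactors M, (2 : (𝓞 k)) ∈ q := by
    intro q hq
    have := Ideal.dvd_iff_le.mp (dvd_of_mem_normalizedFactors hq)
    exact this (Ideal.mem_span_singleton_self _)
  -- decompose a
  obtain ⟨d, I, hd0, haI⟩ := exists_eq_spanSingleton_mul a
  have hI0 : I ≠ 0 := by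
    intro h
    rw [h] at haI
    simp at haI
    exact ha haI
  have hd0' : algebraMap (𝓞 k) k d ≠ 0 := by
    rw [map_ne_zero_iff _ (IsFractionRing.injective (𝓞 k) k)]
    exact hd0
  have hspand0 : Ideal.span {d} ≠ (0 : Ideal (𝓞 k)) := by
    rw [Ne, Ideal.zero_eq_bot, Ideal.span_singleton_eq_bot]; exact hd0
  -- choose γ
  set N : ℕ := (normalizedFactors I).card with hN
  set n : Ideal (𝓞 k) → ℕ := fun q =>
    (normalizedFactors (Ideal.span {d})).count q + N * (normalizedFactors M).count q
      - (normalizedFactors I).count q with hn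
  obtain ⟨γ, hγ0, hγc⟩ := aux_exists_elt hSprime hSne n
  -- norm of γ and odd part
  have hnγ0 : Algebra.norm ℤ γ ≠ 0 := by
    rw [Algebra.norm_ne_zero_iff]
    exact hγ0
  set w : ℕ := padicValInt 2 (Algebra.norm ℤ γ) with hw
  obtain ⟨m, hm⟩ : (2 : ℤ) ^ w ∣ Algebra.norm ℤ γ := padicValInt_dvd _
  have hm0 : m ≠ 0 := by
    intro h; rw [h, mul_zero] at hm; exact hnγ0 hm
  have hmodd : ¬ (2 : ℤ) ∣ m := by
    intro ⟨u, hu⟩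
    have hdvd : (2 : ℤ) ^ (w + 1) ∣ Algebra.norm ℤ γ := ⟨u, by rw [hm, hu]; ring⟩
    have hdvd' : ((2 : ℕ) : ℤ) ^ (w + 1) ∣ Algebra.norm ℤ γ := by exact_mod_cast hdvd
    rw [padicValInt_dvd_iff] at hdvd'
    rcases hdvd' with h | h
    · exact hnγ0 h
    · omega
  have hmR0 : ((m : (𝓞 k))) ≠ 0 := Int.cast_ne_zero.mpr hm0
  have hmRnotmem : ∀ q ∈ normalizedFactors M, (m : (𝓞 k)) ∉ q := by
    intro q hq hmem
    have hqprime : Prime q := prime_of_normalized_factor q hq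
    obtain ⟨t, ht⟩ : Odd m := Int.not_even_iff_odd.mp (fun he => hmodd he.two_dvd)
    have h2t : (2 : (𝓞 k)) * (t : (𝓞 k)) ∈ q := Ideal.mul_mem_right _ _ (h2mem q hq)
    have heq1 : (m : (𝓞 k)) - (2 : (𝓞 k)) * (t : (𝓞 k)) = 1 := by
      rw [ht]; push_cast; ring
    have h1 : (1 : (𝓞 k)) ∈ q := heq1 ▸ sub_mem hmem h2t
    exact (Ideal.isPrime_of_prime hqprime).ne_top (Ideal.eq_top_of_isUnit_mem _ h1 isUnit_one)
  -- Num and Den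
  set μ : (𝓞 k) := (m : (𝓞 k)) * γ with hμ
  have hμ0 : μ ≠ 0 := mul_ne_zero hmR0 hγ0
  have hspanμ0 : Ideal.span {μ} ≠ (0 : Ideal (𝓞 k)) := by
    rw [Ne, Ideal.zero_eq_bot, Ideal.span_singleton_eq_bot]; exact hμ0
  set Num : Ideal (𝓞 k) := Ideal.span {μ} * I with hNum
  set Den : Ideal (𝓞 k) := Ideal.span {d} * M ^ N with hDen
  have hNum0 : Num ≠ 0 := mul_ne_zero hspanμ0 hI0
  have hDen0 : Den ≠ 0 := mul_ne_zero hspand0 (pow_ne_zero _ hM0)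
  -- counts agree on primes above 2
  have hcount : ∀ q ∈ normalizedFactors M,
      (normalizedFactors Num).count q = (normalizedFactors Den).count q := by
    intro q hq
    have hqprime : Prime q := prime_of_normalized_factor q hq
    have hcm : (normalizedFactors (Ideal.span {(m : (𝓞 k))})).count q = 0 := by
      rw [Multiset.count_eq_zero]
      intro hmem
      exact hmRnotmem q hq
        (Ideal.dvd_iff_le.mp (dvd_of_mem_normalizedFactors hmem)
          (Ideal.mem_span_singleton_self _))
    have hspanm0 : Ideal.span {(m : (𝓞 k))} ≠ (0 : Ideal (𝓞 k)) := by
      rw [Ne, Ideal.zero_eq_bot, Ideal.span_singleton_eq_bot]; exact hmR0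
    have hspanγ0 : Ideal.span {γ} ≠ (0 : Ideal (𝓞 k)) := by
      rw [Ne, Ideal.zero_eq_bot, Ideal.span_singleton_eq_bot]; exact hγ0
    have hsplit : Ideal.span {μ} = Ideal.span {(m : (𝓞 k))} * Ideal.span {γ} := by
      rw [Ideal.span_singleton_mul_span_singleton]
    have hNumc : (normalizedFactors Num).count q
        = n q + (normalizedFactors I).count q := by
      rw [hNum, normalizedFactors_mul hspanμ0 hI0, Multiset.count_add, hsplit,
        normalizedFactors_mul hspanm0 hspanγ0, Multiset.count_add, hcm,
        hγc q (Multiset.mem_toFinset.mpr hq)]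
      ring
    have hDenc : (normalizedFactors Den).count q
        = (normalizedFactors (Ideal.span {d})).count q + N * (normalizedFactors M).count q := by
      rw [hDen, normalizedFactors_mul hspand0 (pow_ne_zero _ hM0), Multiset.count_add,
        normalizedFactors_pow, Multiset.count_nsmul]
    have hle1 : (normalizedFactors I).count q ≤ N := Multiset.count_le_card _ _
    have hle2 : 1 ≤ (normalizedFactors M).count q := Multiset.one_le_count_iff_mem.mpr hq
    rw [hNumc, hDenc]
    simp only [hn]
    have : (normalizedFactors I).count q ≤ N * (normalizedFactors M).count q :=
      le_trans hle1 (Nat.le_mul_of_pos_right _ hle2)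
    omega
  -- decompose
  obtain ⟨T, sb, sc, hNumEq, hDenEq, hsb, hsc⟩ := aux_decompose hNum0 hDen0 hcount
  set b : Ideal (𝓞 k) := sb.prod with hb
  set c : Ideal (𝓞 k) := sc.prod with hc
  have hb0 : b ≠ 0 := by intro h; exact hNum0 (by rw [hNumEq, h, mul_zero])
  have hc0 : c ≠ 0 := by intro h; exact hDen0 (by rw [hDenEq, h, mul_zero])
  have hT0 : T ≠ 0 := by intro h; exact hNum0 (by rw [hNumEq, h, zero_mul])
  have h2notmem : ∀ q, Prime q → q ∉ normalizedFactors M → (2 : (𝓞 k)) ∉ q := by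
    intro q hqp hqM hmem
    exact hqM ((mem_normalizedFactors_iff hM0).mpr
      ⟨hqp, Ideal.dvd_iff_le.mpr (by
        rw [hM, Ideal.span_le, Set.singleton_subset_iff]; exact hmem)⟩)
  have hbcop : IsCoprime b M := by
    rw [hb]
    exact Multiset.prod_induction (fun J => IsCoprime J M) sb
      (fun x y hx hy => IsCoprime.mul_left hx hy) isCoprime_one_left
      (fun q hq => aux_coprime hM0 (hsb q hq).1 (hsb q hq).2)
  have hccop : IsCoprime c M := by
    rw [hc]
    exact Multiset.prod_induction (fun J => IsCoprime J M) sc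
      (fun x y hx hy => IsCoprime.mul_left hx hy) isCoprime_one_left
      (fun q hq => aux_coprime hM0 (hsc q hq).1 (hsc q hq).2)
  -- odd norms
  have hodd : ∀ (s : Multiset (Ideal (𝓞 k))),
      (∀ q ∈ s, Prime q ∧ q ∉ normalizedFactors M) → ¬ 2 ∣ Ideal.absNorm s.prod := by
    intro s hs
    have hmap : Ideal.absNorm s.prod = (s.map Ideal.absNorm).prod :=
      map_multiset_prod (Ideal.absNorm : Ideal (𝓞 k) →*₀ ℕ) s
    rw [hmap]
    refine Multiset.prod_induction (fun t => ¬ 2 ∣ t) _ ?_ (by norm_num) ?_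
    · intro x y hx hy hxy
      rcases (Nat.Prime.dvd_mul Nat.prime_two).mp hxy with h | h
      · exact hx h
      · exact hy h
    · intro t ht
      obtain ⟨q, hq, rfl⟩ := Multiset.mem_map.mp ht
      exact aux_odd_absNorm (hs q hq).1 (h2notmem q (hs q hq).1 (hs q hq).2)
  have hob : ¬ 2 ∣ Ideal.absNorm b := hodd sb hsb
  have hoc : ¬ 2 ∣ Ideal.absNorm c := hodd sc hsc
  -- define δ
  set x : k := algebraMap (𝓞 k) k μ with hx
  have hx0 : x ≠ 0 := by
    rw [hx, map_ne_zero_iff _ (IsFractionRing.injective (𝓞 k) k)]; exact hμ0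
  have h2k0 : ((2 : k) ^ N) ≠ 0 := pow_ne_zero _ two_ne_zero
  set δ : k := x / (2 : k) ^ N with hδ
  have hδ0 : δ ≠ 0 := div_ne_zero hx0 h2k0
  -- fractional ideal computation
  have hbF0 : (b : FractionalIdeal (𝓞 k)⁰ k) ≠ 0 := by
    rw [Ne, coeIdeal_eq_zero]; exact hb0
  have hcF0 : (c : FractionalIdeal (𝓞 k)⁰ k) ≠ 0 := by
    rw [Ne, coeIdeal_eq_zero]; exact hc0
  have hTF0 : (T : FractionalIdeal (𝓞 k)⁰ k) ≠ 0 := by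
    rw [Ne, coeIdeal_eq_zero]; exact hT0
  have hIF0 : (I : FractionalIdeal (𝓞 k)⁰ k) ≠ 0 := by
    rw [Ne, coeIdeal_eq_zero]; exact hI0
  have hsd0 : spanSingleton (𝓞 k)⁰ (algebraMap (𝓞 k) k d) ≠ 0 := by
    rw [Ne, spanSingleton_eq_zero_iff]; exact hd0'
  have h2F0 : spanSingleton (𝓞 k)⁰ ((2 : k) ^ N) ≠ 0 := by
    rw [Ne, spanSingleton_eq_zero_iff]; exact h2k0
  have key : spanSingleton (𝓞 k)⁰ δ * a
      = (b : FractionalIdeal (𝓞 k)⁰ k) / (c : FractionalIdeal (𝓞 k)⁰ k) := by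
    have hNumF : (Num : FractionalIdeal (𝓞 k)⁰ k) = spanSingleton (𝓞 k)⁰ x * I := by
      rw [hNum, coeIdeal_mul, coeIdeal_span_singleton, hx]
    have hDenF : (Den : FractionalIdeal (𝓞 k)⁰ k)
        = spanSingleton (𝓞 k)⁰ (algebraMap (𝓞 k) k d) * spanSingleton (𝓞 k)⁰ ((2 : k) ^ N) := by
      rw [hDen, coeIdeal_mul, coeIdeal_span_singleton, coeIdeal_pow, hM,
        coeIdeal_span_singleton, spanSingleton_pow, show algebraMap (𝓞 k) k (2 : 𝓞 k) = (2 : k)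
          from map_ofNat _ 2]
    have hbc : (b : FractionalIdeal (𝓞 k)⁰ k) / (c : FractionalIdeal (𝓞 k)⁰ k)
        = (Num : FractionalIdeal (𝓞 k)⁰ k) / (Den : FractionalIdeal (𝓞 k)⁰ k) := by
      rw [hNumEq, hDenEq, coeIdeal_mul, coeIdeal_mul, mul_div_mul_left _ _ hTF0]
    rw [hbc, hNumF, hDenF, haI]
    have hssδ : spanSingleton (𝓞 k)⁰ δ
        = spanSingleton (𝓞 k)⁰ x / spanSingleton (𝓞 k)⁰ ((2 : k) ^ N) := by
      rw [div_eq_mul_inv, spanSingleton_inv, spanSingleton_mul_spanSingleton,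
        ← div_eq_mul_inv, hδ]
    have hssd : spanSingleton (𝓞 k)⁰ ((algebraMap (𝓞 k) k d)⁻¹)
        = (spanSingleton (𝓞 k)⁰ (algebraMap (𝓞 k) k d))⁻¹ := by rw [spanSingleton_inv]
    rw [hssδ, hssd, div_eq_mul_inv, div_eq_mul_inv, mul_inv]
    ring
  -- norm of δ
  have hmk : algebraMap (𝓞 k) k (m : (𝓞 k)) = algebraMap ℚ k (m : ℚ) := by
    rw [map_intCast, map_intCast]
  have hγk : algebraMap (𝓞 k) k γ = (γ : k) := rfl
  have hnx : Algebra.norm ℚ x = (m : ℚ) ^ 3 * ((Algebra.norm ℤ γ : ℤ) : ℚ) := by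
    rw [hx, hμ, _root_.map_mul, _root_.map_mul, hmk, hnr, hγk, ← Algebra.coe_norm_int]
  have h2kk : (2 : k) = algebraMap ℚ k 2 := (map_ofNat _ 2).symm
  have hδmul : δ * (2 : k) ^ N = x := div_mul_cancel₀ _ h2k0
  have hnδmul : Algebra.norm ℚ δ * (8 : ℚ) ^ N = Algebra.norm ℚ x := by
    have := congrArg (Algebra.norm ℚ) hδmul
    rw [_root_.map_mul, map_pow, h2kk, hnr] at this
    convert this using 2
    all_goals norm_num
  have hnδ : Algebra.norm ℚ δ * (8 : ℚ) ^ N = (m : ℚ) ^ 4 * 2 ^ w := by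
    rw [hnδmul, hnx, hm]
    push_cast
    ring
  have hnδval : Algebra.norm ℚ δ = (m : ℚ) ^ 4 * 2 ^ w / 8 ^ N := by
    field_simp at hnδ ⊢
    linarith
  have hnδ0 : Algebra.norm ℚ δ ≠ 0 := by
    rw [hnδval]
    positivity
  have hnδpos : 0 < Algebra.norm ℚ δ := by
    rw [hnδval]
    have : (m : ℚ) ≠ 0 := Int.cast_ne_zero.mpr hm0
    positivity
  -- parity via absNorm
  obtain ⟨r, hr⟩ := hsq
  have haN0 : FractionalIdeal.absNorm a ≠ 0 := by
    rw [Ne, absNorm_eq_zero_iff]; exact ha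
  have hr0 : r ≠ 0 := by
    intro h; rw [h, mul_zero] at hr; exact haN0 hr
  have habs := congrArg FractionalIdeal.absNorm key
  rw [_root_.map_mul, map_div₀, absNorm_span_singleton, coeIdeal_absNorm, coeIdeal_absNorm,
    abs_of_pos hnδpos, hr] at habs
  have hNb0 : (Ideal.absNorm b : ℚ) ≠ 0 := by
    rw [Ne, Nat.cast_eq_zero, Ideal.absNorm_eq_zero_iff]; exact hb0
  have hNc0 : (Ideal.absNorm c : ℚ) ≠ 0 := by
    rw [Ne, Nat.cast_eq_zero, Ideal.absNorm_eq_zero_iff]; exact hc0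
  -- padic valuations
  have hvb : padicValRat 2 (Ideal.absNorm b : ℚ) = 0 := by
    rw [← padicValRat_of_nat, padicValNat.eq_zero_of_not_dvd hob]
    norm_num
  have hvc : padicValRat 2 (Ideal.absNorm c : ℚ) = 0 := by
    rw [← padicValRat_of_nat, padicValNat.eq_zero_of_not_dvd hoc]
    norm_num
  have hvm : padicValRat 2 ((m : ℚ)) = 0 := by
    rw [show ((m : ℚ)) = ((m : ℤ) : ℚ) by norm_num, padicValRat.of_int,
      padicValInt.eq_zero_of_not_dvd hmodd]
    norm_num
  have hm0Q : (m : ℚ) ≠ 0 := Int.cast_ne_zero.mpr hm0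
  have hv2 : padicValRat 2 (2 : ℚ) = 1 := by
    simpa using padicValRat.self (p := 2) one_lt_two
  have hvδ : padicValRat 2 (Algebra.norm ℚ δ) = (w : ℤ) - 3 * N := by
    rw [hnδval]
    rw [padicValRat.div (mul_ne_zero (pow_ne_zero _ hm0Q) (pow_ne_zero _ two_ne_zero))
      (pow_ne_zero _ (by norm_num : (8 : ℚ) ≠ 0))]
    rw [padicValRat.mul (pow_ne_zero _ hm0Q) (pow_ne_zero _ two_ne_zero)]
    rw [padicValRat.pow (m : ℚ), padicValRat.pow (2 : ℚ),
      show ((8 : ℚ) ^ N) = (2 : ℚ) ^ (3 * N) by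
        rw [show (8 : ℚ) = 2 ^ 3 by norm_num, ← pow_mul],
      padicValRat.pow (2 : ℚ), hvm, hv2]
    push_cast
    ring
  have hveq : padicValRat 2 (Algebra.norm ℚ δ * (r * r))
      = padicValRat 2 ((Ideal.absNorm b : ℚ) / (Ideal.absNorm c : ℚ)) := by
    rw [habs]
  rw [padicValRat.mul hnδ0 (mul_ne_zero hr0 hr0), padicValRat.mul hr0 hr0,
    padicValRat.div hNb0 hNc0, hvb, hvc, hvδ] at hveq
  -- produce the square
  set e : ℤ := -(padicValRat 2 r) with he
  have h2e : (w : ℤ) - 3 * N = 2 * e := by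
    rw [he]; omega
  refine ⟨δ, hδ0, ⟨(m : ℚ) ^ 2 * (2 : ℚ) ^ e, ?_⟩, b, c, hbcop, hccop, key⟩
  rw [hnδval]
  have h8 : (8 : ℚ) ^ N = 2 ^ (3 * N) := by
    rw [show (8 : ℚ) = 2 ^ 3 by norm_num, ← pow_mul]
  rw [h8]
  have hz : (2 : ℚ) ^ w / 2 ^ (3 * N) = (2 : ℚ) ^ ((w : ℤ) - 3 * N) := by
    rw [show ((w : ℤ) - 3 * N) = ((w : ℤ) - ((3 * N : ℕ) : ℤ)) by push_cast; ring,
      zpow_sub₀ (two_ne_zero), zpow_natCast, zpow_natCast]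
  rw [mul_div_assoc, hz, h2e]
  rw [show (2 : ℤ) * e = e + e by ring, zpow_add₀ (two_ne_zero)]
  ring
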